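/- For every n ≥ 1, if the binary expansion of n is n = Σ_{i=1}^{m} 2^{k_i} with distinct exponents k_i, then c(n) = Π_{i=1}^{m} F(k_i), where F(k) = 2^{2^k} + 1 is the k-th Fermat number. In particular c(n) is a product of distinct Fermat numbers. -/

import Mathlib

def c (n : Nat) : Nat := ∑ i ∈ Finset.range (n+1), (Nat.choose n i % 2) * 2^i

def F (k : Nat) : Nat := 2^(2^k) + 1

open Polynomial Finset in
lemma choose_split (m n' i : ℕ) (h : n' < 2^m) :
    ((Nat.choose (2^m + n') i : ZMod 2)) =
      (Nat.choose n' i : ZMod 2) + if 2^m ≤ i then (Nat.choose n' (i - 2^m) : ZMod 2) else 0 := by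
  have key : ((X + 1 : (ZMod 2)[X])) ^ (2^m + n') = (X + 1)^n' + X^(2^m) * (X + 1)^n' := by
    rw [pow_add, add_pow_char_pow]
    ring
  have h1 := Polynomial.coeff_X_add_one_pow (ZMod 2) (2^m + n') i
  rw [key] at h1
  rw [← h1, Polynomial.coeff_add, Polynomial.coeff_X_pow_mul' ((X+1)^n') (2^m) i,
    Polynomial.coeff_X_add_one_pow, Polynomial.coeff_X_add_one_pow]

lemma choose_mod_low (m n' i : ℕ) (h : n' < 2^m) (hi : i < 2^m) :
    Nat.choose (2^m + n') i % 2 = Nat.choose n' i % 2 := by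
  have := choose_split m n' i h
  rw [if_neg (by omega)] at this
  have := (ZMod.natCast_eq_natCast_iff' _ _ 2).mp (by simpa using this)
  simpa using this

lemma choose_mod_high (m n' i : ℕ) (h : n' < 2^m) (hi : 2^m ≤ i) :
    Nat.choose (2^m + n') i % 2 = Nat.choose n' (i - 2^m) % 2 := by
  have := choose_split m n' i h
  rw [if_pos hi, Nat.choose_eq_zero_of_lt (show n' < i by omega), Nat.cast_zero, zero_add] at this
  have := (ZMod.natCast_eq_natCast_iff' _ _ 2).mp this
  simpa using this

lemma c_step (m n' : ℕ) (h : n' < 2^m) : c (2^m + n') = F m * c n' := by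
  unfold c F
  have hsplit : Finset.range (2^m + n' + 1) =
      Finset.Ico 0 (2^m) ∪ Finset.Ico (2^m) (2^m + n' + 1) := by
    rw [Finset.Ico_union_Ico_eq_Ico (by omega) (by omega), Finset.range_eq_Ico]
  rw [hsplit, Finset.sum_union (by
    simp [Finset.disjoint_left, Finset.mem_Ico]; omega)]
  have e1 : ∑ i ∈ Finset.Ico 0 (2^m), (Nat.choose (2^m + n') i % 2) * 2^i
      = ∑ i ∈ Finset.range (n'+1), (Nat.choose n' i % 2) * 2^i := by
    rw [← Finset.range_eq_Ico]
    rw [Finset.sum_congr rfl (fun i hi => by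
      rw [choose_mod_low m n' i h (Finset.mem_range.mp hi)])]
    refine (Finset.sum_subset ?_ ?_).symm
    · intro x hx
      simp only [Finset.mem_range] at *
      omega
    · intro x _ hx
      simp only [Finset.mem_range, not_lt] at hx
      rw [Nat.choose_eq_zero_of_lt (by omega)]
      simp
  have e2 : ∑ i ∈ Finset.Ico (2^m) (2^m + n' + 1), (Nat.choose (2^m + n') i % 2) * 2^i
      = 2^(2^m) * ∑ i ∈ Finset.range (n'+1), (Nat.choose n' i % 2) * 2^i := by
    rw [Finset.sum_Ico_eq_sum_range]
    have : 2^m + n' + 1 - 2^m = n' + 1 := by omega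
    rw [this, Finset.mul_sum]
    refine Finset.sum_congr rfl fun i _ => ?_
    rw [choose_mod_high m n' (2^m + i) h (by omega)]
    have : 2^m + i - 2^m = i := by omega
    rw [this, pow_add]
    ring
  rw [e1, e2]
  ring

lemma main_lemma (S : Finset ℕ) : c (∑ k ∈ S, 2^k) = ∏ k ∈ S, F k := by
  induction S using Finset.induction_on_max with
  | empty => simp [c]
  | insert a S ha ih =>
    have hlt : ∑ k ∈ S, 2^k < 2^a := by
      calc ∑ k ∈ S, 2^k ≤ ∑ k ∈ Finset.range a, 2^k := by
            apply Finset.sum_le_sum_of_subset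
            intro x hx
            exact Finset.mem_range.mpr (ha x hx)
        _ < 2^a := by
            rw [Nat.geomSum_eq le_rfl]
            have h1 : 0 < 2^a := by positivity
            omega
    rw [Finset.sum_insert (fun h' => absurd (ha a h') (lt_irrefl a)),
      Finset.prod_insert (fun h' => absurd (ha a h') (lt_irrefl a)),
      c_step a _ hlt, ih]

theorem stmt1 (n : Nat) (hn : 1 ≤ n) (S : Finset Nat) (hS : n = ∑ k ∈ S, 2^k) :
    c n = ∏ k ∈ S, F k := by
  rw [hS]; exact main_lemma S
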